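/- Let m = x_1 ⋯ x_n and m' = x'_1 ⋯ x'_n be n-bit strings and i ∈ [n]. Then E_1(i, m) = E_0(i, m') if and only if prefix(m, i) = prefix(m', i), x_i = 0, and x'_i = 1. Consequently, if E_1(i, m) = E_0(i, m') holds for an index i at which E_0(i, m) ≠ E_0(i, m'), then i = ind(m, m') and val(m) < val(m'). -/

import Mathlib

/-- `prefixBits m i` is the list of bits of `m` strictly before index `i`
(the bits `x₁ ⋯ x_{i-1}` in 1-based paper notation). -/
def prefixBits {n : ℕ} (m : Fin n → Bool) (i : Fin n) : List Bool :=
  (List.ofFn m).take i.val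

/-- `E0 m i = prefix(m,i) ∥ 0 ∥ xᵢ`. -/
def E0 {n : ℕ} (m : Fin n → Bool) (i : Fin n) : List Bool :=
  prefixBits m i ++ [false, m i]

/-- `E1 m i = prefix(m,i) ∥ (xᵢ + 1)` written as two bits: `01` if `xᵢ = 0`, `10` if `xᵢ = 1`. -/
def E1 {n : ℕ} (m : Fin n → Bool) (i : Fin n) : List Bool :=
  prefixBits m i ++ (if m i then [true, false] else [false, true])

/-- The numeric value of an `n`-bit string, most significant bit first. -/
def msgVal {n : ℕ} (m : Fin n → Bool) : ℕ :=
  ∑ i : Fin n, if m i then 2 ^ (n - 1 - i.val) else 0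

/-- The value of a bit string as a binary integer, most significant bit first. -/
def bitsVal (l : List Bool) : ℕ :=
  l.foldl (fun acc b => 2 * acc + (if b then 1 else 0)) 0

lemma sum_two_pow_lt (t : ℕ) : ∑ j ∈ Finset.range t, 2 ^ j < 2 ^ t := by
  induction t with
  | zero => simp
  | succ t ih => rw [Finset.sum_range_succ, pow_succ]; omega

lemma prefixBits_length {n : ℕ} (m : Fin n → Bool) (i : Fin n) :
    (prefixBits m i).length = i.val := by
  simp [prefixBits, List.length_take, List.length_ofFn, Nat.le_of_lt i.isLt]

lemma prefixBits_eq_iff {n : ℕ} (m m' : Fin n → Bool) (i : Fin n)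
    (h : prefixBits m i = prefixBits m' i) : ∀ k : Fin n, k < i → m k = m' k := by
  intro k hk
  have h1 : (prefixBits m i)[k.val]'(by rw [prefixBits_length]; exact hk) =
      (prefixBits m' i)[k.val]'(by rw [prefixBits_length]; exact hk) := by
    simp [h]
  simpa [prefixBits, List.getElem_take, List.getElem_ofFn] using h1

lemma msgVal_lt {n : ℕ} (m m' : Fin n → Bool) (i : Fin n)
    (h : ∀ k : Fin n, k < i → m k = m' k) (h0 : m i = false) (h1 : m' i = true) :
    msgVal m < msgVal m' := by
  classical
  unfold msgVal
  rw [← Finset.sum_filter_add_sum_filter_not Finset.univ (· < i)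
        (fun k => if m k then 2 ^ (n - 1 - k.val) else 0),
      ← Finset.sum_filter_add_sum_filter_not Finset.univ (· < i)
        (fun k => if m' k then 2 ^ (n - 1 - k.val) else 0)]
  have hA : (∑ k ∈ Finset.univ.filter (· < i), if m k then 2 ^ (n - 1 - k.val) else 0)
      = ∑ k ∈ Finset.univ.filter (· < i), if m' k then 2 ^ (n - 1 - k.val) else 0 := by
    apply Finset.sum_congr rfl
    intro k hk
    rw [h k (Finset.mem_filter.mp hk).2]
  rw [hA]
  apply Nat.add_lt_add_left
  -- bound B
  have hB : (∑ k ∈ Finset.univ.filter (fun k => ¬ k < i),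
      if m k then 2 ^ (n - 1 - k.val) else 0) < 2 ^ (n - 1 - i.val) := by
    calc (∑ k ∈ Finset.univ.filter (fun k => ¬ k < i),
        if m k then 2 ^ (n - 1 - k.val) else 0)
        ≤ ∑ k ∈ Finset.univ.filter (fun k => ¬ k < i),
            (if k = i then 0 else 2 ^ (n - 1 - k.val)) := by
          apply Finset.sum_le_sum
          intro k hk
          by_cases hki : k = i
          · simp [hki, h0]
          · simp [hki]; split <;> simp
      _ = ∑ k ∈ (Finset.univ.filter (fun k => ¬ k < i)).erase i,
            2 ^ (n - 1 - k.val) := by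
          rw [← Finset.sum_erase (Finset.univ.filter (fun k => ¬ k < i))
              (f := fun k : Fin n => if k = i then 0 else 2 ^ (n - 1 - k.val))
              (show (if i = i then (0:ℕ) else 2 ^ (n - 1 - i.val)) = 0 by simp)]
          exact Finset.sum_congr rfl (fun k hk => if_neg (Finset.ne_of_mem_erase hk))
      _ = ∑ j ∈ ((Finset.univ.filter (fun k => ¬ k < i)).erase i).image
            (fun k : Fin n => n - 1 - k.val), 2 ^ j := by
          refine (Finset.sum_image ?_).symm
          intro a _ b _ hab
          have ha := a.isLt; have hb := b.isLt
          exact Fin.ext (by simp only at hab; omega)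
      _ ≤ ∑ j ∈ Finset.range (n - 1 - i.val), 2 ^ j := by
          apply Finset.sum_le_sum_of_subset
          intro j hj
          simp only [Finset.mem_image, Finset.mem_erase, Finset.mem_filter] at hj
          obtain ⟨k, ⟨hki, _, hk2⟩, rfl⟩ := hj
          have : i < k := lt_of_le_of_ne (not_lt.mp hk2) (Ne.symm hki)
          have hik : i.val < k.val := this
          have := k.isLt
          simp only [Finset.mem_range]
          omega
      _ < 2 ^ (n - 1 - i.val) := sum_two_pow_lt _
  have hC : 2 ^ (n - 1 - i.val) ≤ ∑ k ∈ Finset.univ.filter (fun k => ¬ k < i),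
      if m' k then 2 ^ (n - 1 - k.val) else 0 := by
    have := Finset.single_le_sum (f := fun k : Fin n => if m' k then 2 ^ (n - 1 - k.val) else 0)
      (fun k _ => Nat.zero_le _) (show i ∈ Finset.univ.filter (fun k => ¬ k < i) by simp)
    simpa [h1] using this
  omega

/-- `E1(i,m) = E0(i,m')` iff the prefixes agree, `xᵢ = 0` and `x'ᵢ = 1`;
consequently, if moreover `E0(i,m) ≠ E0(i,m')`, then `i` is the most significant differing
bit and `val(m) < val(m')`. -/
theorem E1_eq_E0_iff {n : ℕ} (m m' : Fin n → Bool) (i : Fin n) :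
    (E1 m i = E0 m' i ↔
      prefixBits m i = prefixBits m' i ∧ m i = false ∧ m' i = true) ∧
    (E1 m i = E0 m' i → E0 m i ≠ E0 m' i →
      ((m i ≠ m' i ∧ ∀ k : Fin n, k < i → m k = m' k) ∧ msgVal m < msgVal m')) := by
  have hiff : E1 m i = E0 m' i ↔
      prefixBits m i = prefixBits m' i ∧ m i = false ∧ m' i = true := by
    constructor
    · intro h
      unfold E1 E0 at h
      have hlen : (prefixBits m i).length = (prefixBits m' i).length := by
        rw [prefixBits_length, prefixBits_length]
      obtain ⟨hp, ht⟩ := List.append_inj h hlen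
      cases hm : m i <;> rw [hm] at ht <;> simp at ht
      · exact ⟨hp, rfl, ht⟩
    · rintro ⟨hp, h0, h1⟩
      unfold E1 E0
      rw [hp, h0, h1]
      simp
  refine ⟨hiff, fun h _ => ?_⟩
  obtain ⟨hp, h0, h1⟩ := hiff.mp h
  exact ⟨⟨by simp [h0, h1], prefixBits_eq_iff m m' i hp⟩, msgVal_lt m m' i (prefixBits_eq_iff m m' i hp) h0 h1⟩
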